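/- Let R' = k[x_1,...,x_m], R = k[x_1,...,x_{m+n}], S' = k[X_1,...,X_m], S = k[X_1,...,X_{m+n}] with contraction actions. For G ∈ S' and F = X_{m+1}^{a_{m+1}}···X_{m+n}^{a_{m+n}} G ∈ S with a_{m+1},...,a_{m+n} ∈ Z_{≥0}, one has Ann_R(F) = Ann_{R'}(G)R + (x_{m+1}^{a_{m+1}+1},...,x_{m+n}^{a_{m+n}+1}). -/

import Mathlib

open scoped Classical
open MvPolynomial Finset

/-- The contraction action of `k[x_1,...,x_N]` on `k[X_1,...,X_N]`. -/
noncomputable def contract {k : Type*} [CommRing k] {σ : Type*}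
    (f F : MvPolynomial σ k) : MvPolynomial σ k :=
  ∑ a ∈ f.support, ∑ b ∈ F.support,
    if a ≤ b then MvPolynomial.monomial (b - a) (MvPolynomial.coeff a f * MvPolynomial.coeff b F)
    else 0

/-- `Ann_R(F) = {f ∈ R : f ∘ F = 0}` as a set. -/
noncomputable def annSet {k : Type*} [CommRing k] {σ : Type*}
    (F : MvPolynomial σ k) : Set (MvPolynomial σ k) :=
  {f | contract f F = 0}

namespace Stmt5Aux

variable {k : Type*} [CommRing k] {σ : Type*}

theorem coeff_contract (f F : MvPolynomial σ k) (c : σ →₀ ℕ) :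
    MvPolynomial.coeff c (contract f F)
      = ∑ d ∈ f.support, MvPolynomial.coeff d f * MvPolynomial.coeff (d + c) F := by
  unfold contract
  rw [MvPolynomial.coeff_sum]
  refine Finset.sum_congr rfl fun d _ => ?_
  rw [MvPolynomial.coeff_sum]
  have key : ∀ b ∈ F.support,
      MvPolynomial.coeff c (if d ≤ b then
          MvPolynomial.monomial (b - d) (MvPolynomial.coeff d f * MvPolynomial.coeff b F) else 0)
        = if b = d + c then MvPolynomial.coeff d f * MvPolynomial.coeff b F else 0 := by
    intro b _
    by_cases hb : b = d + c
    · subst hb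
      have h1 : d ≤ d + c := le_add_right le_rfl
      simp [h1, MvPolynomial.coeff_monomial]
    · split_ifs with h1
      · rw [MvPolynomial.coeff_monomial]
        have : ¬ (b - d = c) := by
          intro hc
          exact hb (by rw [← hc, add_tsub_cancel_of_le h1])
        simp [this]
      · simp
  rw [Finset.sum_congr rfl key, Finset.sum_ite_eq' F.support (d + c)
    (fun b => MvPolynomial.coeff d f * MvPolynomial.coeff b F)]
  split_ifs with h
  · rfl
  · rw [MvPolynomial.notMem_support_iff.mp h, mul_zero]

theorem coeff_contract_superset (f F : MvPolynomial σ k) (c : σ →₀ ℕ)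
    (s : Finset (σ →₀ ℕ)) (hs : f.support ⊆ s) :
    MvPolynomial.coeff c (contract f F)
      = ∑ d ∈ s, MvPolynomial.coeff d f * MvPolynomial.coeff (d + c) F := by
  rw [coeff_contract]
  refine Finset.sum_subset hs fun d _ hd => ?_
  rw [MvPolynomial.notMem_support_iff.mp hd, zero_mul]

theorem contract_zero_left (F : MvPolynomial σ k) : contract 0 F = 0 := by
  simp [contract]

theorem contract_zero_right (f : MvPolynomial σ k) : contract f 0 = 0 := by
  simp [contract]

theorem contract_add_left (f g F : MvPolynomial σ k) :
    contract (f + g) F = contract f F + contract g F := by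
  ext c
  rw [MvPolynomial.coeff_add,
    coeff_contract_superset (f + g) F c (f.support ∪ g.support)
      (MvPolynomial.support_add ..),
    coeff_contract_superset f F c (f.support ∪ g.support) Finset.subset_union_left,
    coeff_contract_superset g F c (f.support ∪ g.support) Finset.subset_union_right,
    ← Finset.sum_add_distrib]
  simp [MvPolynomial.coeff_add, add_mul]

/-- `contract · F` as an additive monoid hom. -/
noncomputable def contractHom (F : MvPolynomial σ k) : MvPolynomial σ k →+ MvPolynomial σ k where
  toFun f := contract f F
  map_zero' := contract_zero_left F
  map_add' f g := contract_add_left f g F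

theorem coeff_contract_monomial (d : σ →₀ ℕ) (r : k) (F : MvPolynomial σ k) (c : σ →₀ ℕ) :
    MvPolynomial.coeff c (contract (MvPolynomial.monomial d r) F)
      = r * MvPolynomial.coeff (d + c) F := by
  rw [coeff_contract_superset _ F c {d} (MvPolynomial.support_monomial_subset)]
  simp [MvPolynomial.coeff_monomial]

theorem contract_mul (f g F : MvPolynomial σ k) :
    contract (f * g) F = contract f (contract g F) := by
  induction f using MvPolynomial.induction_on' with
  | monomial u r =>
    have hmg : MvPolynomial.monomial u r * g
        = ∑ b ∈ g.support, MvPolynomial.monomial (u + b) (r * MvPolynomial.coeff b g) := by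
      conv_lhs => rw [MvPolynomial.as_sum g]
      rw [Finset.mul_sum]
      exact Finset.sum_congr rfl fun b _ => MvPolynomial.monomial_mul
    ext c
    have hsum : contract (∑ b ∈ g.support,
        MvPolynomial.monomial (u + b) (r * MvPolynomial.coeff b g)) F
        = ∑ b ∈ g.support,
            contract (MvPolynomial.monomial (u + b) (r * MvPolynomial.coeff b g)) F :=
      map_sum (contractHom F) _ _
    rw [hmg, hsum, MvPolynomial.coeff_sum, coeff_contract_monomial, coeff_contract,
      Finset.mul_sum]
    refine Finset.sum_congr rfl fun b _ => ?_
    rw [coeff_contract_monomial, add_assoc, add_left_comm u b c]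
    ring
  | add p q hp hq =>
    rw [add_mul, contract_add_left, contract_add_left, hp, hq]

/-- The annihilator as an ideal. -/
noncomputable def annIdeal (F : MvPolynomial σ k) : Ideal (MvPolynomial σ k) where
  carrier := annSet F
  zero_mem' := contract_zero_left F
  add_mem' := by
    intro f g hf hg
    have hf' : contract f F = 0 := hf
    have hg' : contract g F = 0 := hg
    show contract (f + g) F = 0
    rw [contract_add_left, hf', hg', add_zero]
  smul_mem' := by
    intro c f hf
    have hf' : contract f F = 0 := hf
    show contract (c * f) F = 0
    rw [contract_mul, hf', contract_zero_right]

section FinStuff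

variable {m n : ℕ}

/-- Combine exponent vectors on the two blocks of variables. -/
noncomputable def emb (u : Fin m →₀ ℕ) (v : Fin n →₀ ℕ) : Fin (m + n) →₀ ℕ :=
  Finsupp.equivFunOnFinite.symm (Fin.addCases u v)

noncomputable def res1 (b : Fin (m + n) →₀ ℕ) : Fin m →₀ ℕ :=
  Finsupp.equivFunOnFinite.symm fun i => b (Fin.castAdd n i)

noncomputable def res2 (b : Fin (m + n) →₀ ℕ) : Fin n →₀ ℕ :=
  Finsupp.equivFunOnFinite.symm fun j => b (Fin.natAdd m j)

@[simp] lemma emb_castAdd (u : Fin m →₀ ℕ) (v : Fin n →₀ ℕ) (i : Fin m) :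
    emb u v (Fin.castAdd n i) = u i := by
  simp [emb]

@[simp] lemma emb_natAdd (u : Fin m →₀ ℕ) (v : Fin n →₀ ℕ) (j : Fin n) :
    emb u v (Fin.natAdd m j) = v j := by
  simp [emb]

@[simp] lemma res1_apply (b : Fin (m + n) →₀ ℕ) (i : Fin m) :
    res1 b i = b (Fin.castAdd n i) := by simp [res1]

@[simp] lemma res2_apply (b : Fin (m + n) →₀ ℕ) (j : Fin n) :
    res2 b j = b (Fin.natAdd m j) := by simp [res2]

lemma emb_res (b : Fin (m + n) →₀ ℕ) : emb (res1 b) (res2 b) = b := by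
  ext x
  induction x using Fin.addCases with
  | left i => simp
  | right j => simp

@[simp] lemma res1_emb (u : Fin m →₀ ℕ) (v : Fin n →₀ ℕ) : res1 (emb u v) = u := by
  ext i; simp

@[simp] lemma res2_emb (u : Fin m →₀ ℕ) (v : Fin n →₀ ℕ) : res2 (emb u v) = v := by
  ext j; simp

lemma emb_add (u u' : Fin m →₀ ℕ) (v v' : Fin n →₀ ℕ) :
    emb u v + emb u' v' = emb (u + u') (v + v') := by
  ext x
  induction x using Fin.addCases with
  | left i => simp
  | right j => simp

lemma emb_le_emb {u u' : Fin m →₀ ℕ} {v v' : Fin n →₀ ℕ} :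
    emb u v ≤ emb u' v' ↔ u ≤ u' ∧ v ≤ v' := by
  constructor
  · intro h
    rw [Finsupp.le_def] at h
    exact ⟨Finsupp.le_def.mpr fun i => by simpa using h (Fin.castAdd n i),
      Finsupp.le_def.mpr fun j => by simpa using h (Fin.natAdd m j)⟩
  · rintro ⟨h1, h2⟩
    rw [Finsupp.le_def]
    intro x
    induction x using Fin.addCases with
    | left i => simpa using h1 i
    | right j => simpa using h2 j

lemma emb_tsub (u u' : Fin m →₀ ℕ) (v v' : Fin n →₀ ℕ) :
    emb u v - emb u' v' = emb (u - u') (v - v') := by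
  ext x
  induction x using Fin.addCases with
  | left i => simp [Finsupp.tsub_apply]
  | right j => simp [Finsupp.tsub_apply]

lemma castAdd_injective' : Function.Injective (Fin.castAdd n : Fin m → Fin (m + n)) :=
  Fin.castAdd_injective m n

lemma natAdd_injective' : Function.Injective (Fin.natAdd m : Fin n → Fin (m + n)) := by
  intro j j' h
  have := congrArg Fin.val h
  simp [Fin.ext_iff] at this ⊢
  omega

lemma castAdd_ne_natAdd (i : Fin m) (j : Fin n) :
    (Fin.castAdd n i : Fin (m + n)) ≠ Fin.natAdd m j := by
  intro h
  have := congrArg Fin.val h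
  simp at this
  omega

lemma natAdd_not_mem_range (j : Fin n) :
    (Fin.natAdd m j : Fin (m + n)) ∉ Set.range (Fin.castAdd n : Fin m → Fin (m + n)) := by
  rintro ⟨i, hi⟩
  exact castAdd_ne_natAdd i j hi

lemma mapDomain_eq_emb (u : Fin m →₀ ℕ) :
    Finsupp.mapDomain (Fin.castAdd n) u = emb u 0 := by
  ext x
  induction x using Fin.addCases with
  | left i => simp [Finsupp.mapDomain_apply castAdd_injective']
  | right j => simp [Finsupp.mapDomain_notin_range _ _ (natAdd_not_mem_range j)]

lemma single_natAdd_eq_emb (j : Fin n) (t : ℕ) :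
    (Finsupp.single (Fin.natAdd m j) t : Fin (m + n) →₀ ℕ) = emb 0 (Finsupp.single j t) := by
  ext x
  induction x using Fin.addCases with
  | left i => simp [Finsupp.single_apply, (castAdd_ne_natAdd i j).symm]
  | right j' =>
    simp only [emb_natAdd]
    rw [Finsupp.single_apply, Finsupp.single_apply]
    by_cases h : j = j'
    · simp [h]
    · rw [if_neg h, if_neg fun hc => h (natAdd_injective' hc)]

end FinStuff

section Main

variable {k : Type*} [CommRing k] {m n : ℕ} (G : MvPolynomial (Fin m) k) (a : Fin n → ℕ)

/-- `a` as a finsupp. -/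
noncomputable def aF (a : Fin n → ℕ) : Fin n →₀ ℕ := Finsupp.equivFunOnFinite.symm a

@[simp] lemma aF_apply (j : Fin n) : aF a j = a j := by simp [aF]

lemma prod_X_eq :
    (∏ j, (MvPolynomial.X (Fin.natAdd m j) : MvPolynomial (Fin (m + n)) k) ^ a j)
      = MvPolynomial.monomial (emb 0 (aF a)) 1 := by
  have h1 : (∏ j, (MvPolynomial.X (Fin.natAdd m j) : MvPolynomial (Fin (m + n)) k) ^ a j)
      = ∏ j, MvPolynomial.monomial (Finsupp.single (Fin.natAdd m j) (a j)) (1 : k) := by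
    refine Finset.prod_congr rfl fun j _ => ?_
    rw [MvPolynomial.X_pow_eq_monomial]
  have h2 : (∑ j, Finsupp.single (Fin.natAdd m j) (a j) : Fin (m + n) →₀ ℕ)
      = emb 0 (aF a) := by
    ext x
    induction x using Fin.addCases with
  | left i =>
    rw [Finsupp.finset_sum_apply]
    simp only [emb_castAdd, Finsupp.coe_zero, Pi.zero_apply]
    refine Finset.sum_eq_zero fun j _ => ?_
    rw [Finsupp.single_apply, if_neg fun hc => castAdd_ne_natAdd i j hc.symm]
  | right j' =>
    rw [Finsupp.finset_sum_apply]
    simp only [emb_natAdd, aF_apply]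
    rw [Finset.sum_eq_single j']
    · simp
    · intro j _ hj
      rw [Finsupp.single_apply, if_neg fun hc => hj (natAdd_injective' hc)]
    · simp
  rw [h1, ← one_mul (∏ j, _), ← MvPolynomial.C_1, ← MvPolynomial.monomial_sum_index, h2]

lemma coeff_renameG (u : Fin m →₀ ℕ) (v : Fin n →₀ ℕ) :
    MvPolynomial.coeff (emb u v)
        (MvPolynomial.rename (Fin.castAdd n) G : MvPolynomial (Fin (m + n)) k)
      = if v = 0 then MvPolynomial.coeff u G else 0 := by
  by_cases hv : v = 0
  · subst hv
    rw [if_pos rfl, ← mapDomain_eq_emb]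
    exact MvPolynomial.coeff_rename_mapDomain _ castAdd_injective' G u
  · rw [if_neg hv]
    refine MvPolynomial.coeff_rename_eq_zero _ _ _ fun u' hu' => ?_
    exfalso
    obtain ⟨j, hj⟩ : ∃ j, v j ≠ 0 := by
      by_contra hc
      push_neg at hc
      exact hv (Finsupp.ext hc)
    have := congrArg (fun w => w (Fin.natAdd m j)) hu'
    simp only [mapDomain_eq_emb, emb_natAdd, Finsupp.coe_zero, Pi.zero_apply] at this
    exact hj this.symm

lemma coeff_F (u : Fin m →₀ ℕ) (v : Fin n →₀ ℕ) :
    MvPolynomial.coeff (emb u v)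
        ((∏ j, (MvPolynomial.X (Fin.natAdd m j) : MvPolynomial (Fin (m + n)) k) ^ a j) *
          MvPolynomial.rename (Fin.castAdd n) G)
      = if v = aF a then MvPolynomial.coeff u G else 0 := by
  rw [prod_X_eq, mul_comm, MvPolynomial.coeff_mul_monomial']
  by_cases hle : aF a ≤ v
  · have h1 : emb (0 : Fin m →₀ ℕ) (aF a) ≤ emb u v := emb_le_emb.mpr ⟨zero_le, hle⟩
    rw [if_pos h1, emb_tsub, tsub_zero, coeff_renameG, mul_one]
    have : v - aF a = 0 ↔ v = aF a := by
      constructor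
      · intro h
        exact le_antisymm (tsub_eq_zero_iff_le.mp h) hle
      · intro h; rw [h, tsub_self]
    by_cases h2 : v = aF a
    · rw [if_pos (this.mpr h2), if_pos h2]
    · rw [if_neg (fun hc => h2 (this.mp hc)), if_neg h2]
  · have h1 : ¬ emb (0 : Fin m →₀ ℕ) (aF a) ≤ emb u v := fun hc => hle (emb_le_emb.mp hc).2
    rw [if_neg h1, if_neg fun hc => hle (le_of_eq hc.symm)]

end Main

end Stmt5Aux

open Stmt5Aux

/-- For `G ∈ S' = k[X_1,...,X_m]` and `F = X_{m+1}^{a_{m+1}} ⋯ X_{m+n}^{a_{m+n}} G ∈ S`,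
one has `Ann_R(F) = Ann_{R'}(G)R + (x_{m+1}^{a_{m+1}+1},...,x_{m+n}^{a_{m+n}+1})`. -/
theorem stmt5 (k : Type*) [Field k] (m n : ℕ)
    (G : MvPolynomial (Fin m) k) (a : Fin n → ℕ) :
    annSet ((∏ j, (MvPolynomial.X (Fin.natAdd m j) : MvPolynomial (Fin (m + n)) k) ^ a j) *
        MvPolynomial.rename (Fin.castAdd n) G) =
      ((Ideal.span ((⇑(MvPolynomial.rename (Fin.castAdd n) : MvPolynomial (Fin m) k →ₐ[k] MvPolynomial (Fin (m + n)) k)) '' annSet G ∪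
          Set.range fun j : Fin n =>
            (MvPolynomial.X (Fin.natAdd m j) : MvPolynomial (Fin (m + n)) k) ^ (a j + 1))) :
        Set (MvPolynomial (Fin (m + n)) k)) := by
    classical
  set F : MvPolynomial (Fin (m + n)) k :=
    (∏ j, (MvPolynomial.X (Fin.natAdd m j) : MvPolynomial (Fin (m + n)) k) ^ a j) *
      MvPolynomial.rename (Fin.castAdd n) G with hF
  set S : Set (MvPolynomial (Fin (m + n)) k) :=
    (⇑(MvPolynomial.rename (Fin.castAdd n) :
        MvPolynomial (Fin m) k →ₐ[k] MvPolynomial (Fin (m + n)) k)) '' annSet G ∪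
      Set.range fun j : Fin n =>
        (MvPolynomial.X (Fin.natAdd m j) : MvPolynomial (Fin (m + n)) k) ^ (a j + 1) with hS
  have coeffF : ∀ (u : Fin m →₀ ℕ) (v : Fin n →₀ ℕ),
      MvPolynomial.coeff (emb u v) F
        = if v = aF a then MvPolynomial.coeff u G else 0 := fun u v => coeff_F G a u v
  ext f
  simp only [annSet, Set.mem_setOf_eq, SetLike.mem_coe]
  constructor
  · -- hard direction: contract f F = 0 → f ∈ span S
    intro hf
    set s₀ : Finset (Fin (m + n) →₀ ℕ) :=
      f.support.filter (fun c => res2 c ≤ aF a) with hs₀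
    set s₁ : Finset (Fin (m + n) →₀ ℕ) :=
      f.support.filter (fun c => ¬ res2 c ≤ aF a) with hs₁
    have hsplit : f = (∑ c ∈ s₀, MvPolynomial.monomial c (MvPolynomial.coeff c f))
        + (∑ c ∈ s₁, MvPolynomial.monomial c (MvPolynomial.coeff c f)) := by
      conv_lhs => rw [MvPolynomial.as_sum f]
      rw [hs₀, hs₁, Finset.sum_filter_add_sum_filter_not]
    set f₀ : MvPolynomial (Fin (m + n)) k :=
      ∑ c ∈ s₀, MvPolynomial.monomial c (MvPolynomial.coeff c f) with hf₀
    set f₁ : MvPolynomial (Fin (m + n)) k :=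
      ∑ c ∈ s₁, MvPolynomial.monomial c (MvPolynomial.coeff c f) with hf₁
    -- bad indices give an element of the big variable power part of the ideal
    have h₁mem : f₁ ∈ Ideal.span S := by
      refine Ideal.sum_mem _ fun c hc => ?_
      obtain ⟨hc1, hc2⟩ := Finset.mem_filter.mp hc
      obtain ⟨j, hj⟩ : ∃ j, a j < c (Fin.natAdd m j) := by
        by_contra hcon
        push_neg at hcon
        exact hc2 (Finsupp.le_def.mpr fun j => by simpa using hcon j)
      have hsle : Finsupp.single (Fin.natAdd m j) (a j + 1) ≤ c :=
        Finsupp.single_le_iff.mpr (by omega)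
      have hmono : MvPolynomial.monomial c (MvPolynomial.coeff c f)
          = MvPolynomial.monomial (c - Finsupp.single (Fin.natAdd m j) (a j + 1))
              (MvPolynomial.coeff c f) *
              (MvPolynomial.X (Fin.natAdd m j) : MvPolynomial (Fin (m + n)) k) ^ (a j + 1) := by
        rw [MvPolynomial.X_pow_eq_monomial, MvPolynomial.monomial_mul, mul_one,
          tsub_add_cancel_of_le hsle]
      rw [hmono]
      exact Ideal.mul_mem_left _ _ (Ideal.subset_span (Set.mem_union_right _ ⟨j, rfl⟩))
    -- bad part annihilates F as well
    have h₁ann : contract f₁ F = 0 := by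
      have hsum : contract f₁ F
          = ∑ c ∈ s₁, contract (MvPolynomial.monomial c (MvPolynomial.coeff c f)) F :=
        map_sum (contractHom F) _ _
      rw [hsum]
      refine Finset.sum_eq_zero fun c hc => ?_
      obtain ⟨hc1, hc2⟩ := Finset.mem_filter.mp hc
      obtain ⟨j, hj⟩ : ∃ j, a j < c (Fin.natAdd m j) := by
        by_contra hcon
        push_neg at hcon
        exact hc2 (Finsupp.le_def.mpr fun j => by simpa using hcon j)
      ext b
      rw [coeff_contract_monomial]
      have hcb : c + b = emb (res1 c + res1 b) (res2 c + res2 b) := by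
        rw [← emb_add, emb_res, emb_res]
      rw [hcb, coeffF, if_neg, mul_zero, MvPolynomial.coeff_zero]
      intro hcon
      have := congrArg (fun w => w j) hcon
      simp only [Finsupp.add_apply, res2_apply, aF_apply] at this
      omega
    have h₀ann : contract f₀ F = 0 := by
      have : contract f₀ F + contract f₁ F = 0 := by
        rw [← contract_add_left, ← hsplit, hf]
      rwa [h₁ann, add_zero] at this
    -- group the good part by the exponents of the last n variables
    set gg : (Fin n →₀ ℕ) → MvPolynomial (Fin m) k := fun v =>
      ∑ c ∈ s₀.filter (fun c => res2 c = v),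
        MvPolynomial.monomial (res1 c) (MvPolynomial.coeff c f) with hgg
    have hA : ∑ v ∈ s₀.image res2,
        MvPolynomial.monomial (emb 0 v) (1 : k) * MvPolynomial.rename (Fin.castAdd n) (gg v)
          = f₀ := by
      have hterm : ∀ v ∈ s₀.image res2,
          MvPolynomial.monomial (emb 0 v) (1 : k) * MvPolynomial.rename (Fin.castAdd n) (gg v)
            = ∑ c ∈ s₀.filter (fun c => res2 c = v),
                MvPolynomial.monomial c (MvPolynomial.coeff c f) := by
        intro v _
        rw [hgg, map_sum, Finset.mul_sum]
        refine Finset.sum_congr rfl fun c hc => ?_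
        have hc2 : res2 c = v := (Finset.mem_filter.mp hc).2
        rw [MvPolynomial.rename_monomial, mapDomain_eq_emb, MvPolynomial.monomial_mul,
          one_mul, emb_add, zero_add, add_zero, ← hc2, emb_res]
      rw [Finset.sum_congr rfl hterm,
        Finset.sum_fiberwise_of_maps_to (fun c hc => Finset.mem_image_of_mem _ hc)]
    have hB : ∀ v ∈ s₀.image res2, contract (gg v) G = 0 := by
      intro v hv
      have hvle : v ≤ aF a := by
        obtain ⟨c₀, hc₀, rfl⟩ := Finset.mem_image.mp hv
        exact (Finset.mem_filter.mp hc₀).2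
      ext d
      have hL : MvPolynomial.coeff d (contract (gg v) G)
          = ∑ c ∈ s₀, if res2 c = v then
              MvPolynomial.coeff c f * MvPolynomial.coeff (res1 c + d) G else 0 := by
        have hsum : contract (gg v) G
            = ∑ c ∈ s₀.filter (fun c => res2 c = v),
                contract (MvPolynomial.monomial (res1 c) (MvPolynomial.coeff c f)) G :=
          map_sum (contractHom G) _ _
        rw [hsum, MvPolynomial.coeff_sum]
        conv_rhs => rw [← Finset.sum_filter]
        exact Finset.sum_congr rfl fun c _ => coeff_contract_monomial _ _ _ _
      have hR : MvPolynomial.coeff (emb d (aF a - v)) (contract f₀ F)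
          = ∑ c ∈ s₀, if res2 c = v then
              MvPolynomial.coeff c f * MvPolynomial.coeff (res1 c + d) G else 0 := by
        have hsum : contract f₀ F
            = ∑ c ∈ s₀, contract (MvPolynomial.monomial c (MvPolynomial.coeff c f)) F :=
          map_sum (contractHom F) _ _
        rw [hsum, MvPolynomial.coeff_sum]
        refine Finset.sum_congr rfl fun c hc => ?_
        rw [hs₀] at hc
        have hcle : res2 c ≤ aF a := (Finset.mem_filter.mp hc).2
        rw [coeff_contract_monomial]
        have hcb : c + emb d (aF a - v) = emb (res1 c + d) (res2 c + (aF a - v)) := by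
          rw [← emb_add, emb_res]
        rw [hcb, coeffF]
        by_cases hcv : res2 c = v
        · have hcond : res2 c + (aF a - v) = aF a := by
            ext j
            have h1 := Finsupp.le_def.mp hcle j
            have h2 := Finsupp.le_def.mp hvle j
            rw [Finsupp.add_apply, Finsupp.tsub_apply, hcv]
            omega
          rw [if_pos hcv, if_pos hcond]
        · have hcond : ¬ (res2 c + (aF a - v) = aF a) := by
            intro hcon
            apply hcv
            ext j
            have h1 := Finsupp.le_def.mp hcle j
            have h2 := Finsupp.le_def.mp hvle j
            have h3 := congrArg (fun w => w j) hcon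
            simp only [Finsupp.add_apply, Finsupp.tsub_apply] at h3
            omega
          rw [if_neg hcv, if_neg hcond, mul_zero]
      rw [hL, ← hR, h₀ann, MvPolynomial.coeff_zero, MvPolynomial.coeff_zero]
    have h₀mem : f₀ ∈ Ideal.span S := by
      rw [← hA]
      refine Ideal.sum_mem _ fun v hv => ?_
      refine Ideal.mul_mem_left _ _ (Ideal.subset_span ?_)
      exact Set.mem_union_left _ ⟨gg v, hB v hv, rfl⟩
    rw [hsplit]
    exact Ideal.add_mem _ h₀mem h₁mem
  · -- easy direction: span S ⊆ annihilator
    intro hf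
    have hgen : S ⊆ (annIdeal F : Set (MvPolynomial (Fin (m + n)) k)) := by
      rintro x (⟨f', hf', rfl⟩ | ⟨j, rfl⟩)
      · -- rename of an annihilator of G
        have hf'0 : contract f' G = 0 := hf'
        show contract (MvPolynomial.rename (Fin.castAdd n) f') F = 0
        have hr : (MvPolynomial.rename (Fin.castAdd n) f' : MvPolynomial (Fin (m + n)) k)
            = ∑ c ∈ f'.support,
                MvPolynomial.monomial (emb c 0) (MvPolynomial.coeff c f') := by
          conv_lhs => rw [MvPolynomial.as_sum f']
          rw [map_sum]
          exact Finset.sum_congr rfl fun c _ => by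
            rw [MvPolynomial.rename_monomial, mapDomain_eq_emb]
        have hsum : contract (∑ c ∈ f'.support,
            MvPolynomial.monomial (emb c 0) (MvPolynomial.coeff c f')) F
            = ∑ c ∈ f'.support,
                contract (MvPolynomial.monomial (emb c 0) (MvPolynomial.coeff c f')) F :=
          map_sum (contractHom F) _ _
        ext b
        rw [hr, hsum, MvPolynomial.coeff_sum, MvPolynomial.coeff_zero]
        have hterm : ∀ c ∈ f'.support,
            MvPolynomial.coeff b
                (contract (MvPolynomial.monomial (emb c 0) (MvPolynomial.coeff c f')) F)
              = MvPolynomial.coeff c f' *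
                  (if res2 b = aF a then MvPolynomial.coeff (c + res1 b) G else 0) := by
          intro c _
          rw [coeff_contract_monomial]
          have hcb : emb c 0 + b = emb (c + res1 b) (0 + res2 b) := by
            conv_lhs => rw [← emb_res b]
            rw [emb_add]
          rw [hcb, zero_add, coeffF]
        rw [Finset.sum_congr rfl hterm]
        by_cases hv : res2 b = aF a
        · simp only [if_pos hv]
          have : ∑ c ∈ f'.support,
              MvPolynomial.coeff c f' * MvPolynomial.coeff (c + res1 b) G
                = MvPolynomial.coeff (res1 b) (contract f' G) := (coeff_contract f' G _).symm
          rw [this, hf'0, MvPolynomial.coeff_zero]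
        · simp [if_neg hv]
      · -- powers of the last variables
        show contract ((MvPolynomial.X (Fin.natAdd m j) :
            MvPolynomial (Fin (m + n)) k) ^ (a j + 1)) F = 0
        rw [MvPolynomial.X_pow_eq_monomial]
        ext b
        rw [coeff_contract_monomial, MvPolynomial.coeff_zero, single_natAdd_eq_emb]
        have hcb : emb 0 (Finsupp.single j (a j + 1)) + b
            = emb (0 + res1 b) (Finsupp.single j (a j + 1) + res2 b) := by
          conv_lhs => rw [← emb_res b]
          rw [emb_add]
        rw [hcb, coeffF, if_neg, mul_zero]
        intro hcon
        have := congrArg (fun w => w j) hcon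
        simp only [Finsupp.add_apply, Finsupp.single_eq_same, aF_apply] at this
        omega
    have hle : Ideal.span S ≤ annIdeal F := Ideal.span_le.mpr hgen
    exact hle hf
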